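/- arXiv:1805.00091 — 2 statements merged into one kernel-verified Lean document; each statement's English description precedes it below -/
import Mathlib

section
/- Let p be a prime, n ≥ 1, and let G be a stem finite p-group of nilpotency class 3 and of conjugate type (1, p^{2n}), equipped with a generating set a_1, …, a_n, b_1, …, b_n satisfying properties (i)–(v) listed in the context. Then for every h ∈ G' \ Z(G) and every a ∈ A, b ∈ B with ab ≠ 1, there exists h* ∈ G' such that h ∈ [a·b·h*, G], where [x, G] = {[x,y] : y ∈ G}. -/
open scoped Classical
open scoped Pointwise
open scoped commutatorElement

namespace Paper

/-- The commutator `[x,y] = x⁻¹y⁻¹xy`. -/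
def comm {G : Type*} [Group G] (x y : G) : G := x⁻¹ * y⁻¹ * x * y

/-- `K(G)`, the set of commutators in `G`. -/
def KG (G : Type*) [Group G] : Set G := {g : G | ∃ x y : G, comm x y = g}

/-- The fiber of `g` under the commutator word map. -/
def fiber {G : Type*} [Group G] (g : G) : Set (G × G) := {q : G × G | comm q.1 q.2 = g}

/-- `Pr_g(G) = |fiber(g)| / |G|²`. -/
noncomputable def Pr (G : Type*) [Group G] (g : G) : ℚ :=
  (Nat.card (fiber g) : ℚ) / ((Nat.card G : ℚ)) ^ 2

/-- `P(G) = {Pr_g(G) : g ∈ K(G), g ≠ 1}`. -/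
noncomputable def PSet (G : Type*) [Group G] : Set ℚ :=
  {q : ℚ | ∃ g ∈ KG G, g ≠ 1 ∧ Pr G g = q}

/-- The conjugacy class `g^G` of `g` in `G`. -/
def conjClass {G : Type*} [Group G] (g : G) : Set G := {h : G | ∃ x : G, x⁻¹ * g * x = h}

/-- `G` is of conjugate type `(1, m)`: every noncentral element has conjugacy
class of size exactly `m`. -/
def IsConjugateType1 (G : Type*) [Group G] (m : ℕ) : Prop :=
  ∀ g : G, g ∉ Subgroup.center G → Nat.card (conjClass g) = m

/-- `TZ_g = {xZ(G) ∈ G/Z(G) : g ∈ [x,G]}`. -/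
def TZ (G : Type*) [Group G] (g : G) : Set (G ⧸ Subgroup.center G) :=
  {xz : G ⧸ Subgroup.center G |
    ∃ x : G, (QuotientGroup.mk x : G ⧸ Subgroup.center G) = xz ∧ ∃ h : G, comm x h = g}


/-- The ordered product `a_1^{k_1} ⋯ a_n^{k_n}`. -/
def prodPow {G : Type*} [Group G] {n : ℕ} (a : Fin n → G) (k : Fin n → ℕ) : G :=
  (List.ofFn fun i => a i ^ k i).prod

/-- The set `{a_1^{k_1} ⋯ a_n^{k_n} : 0 ≤ k_i ≤ p − 1}`. -/
def powerProducts {G : Type*} [Group G] {n : ℕ} (p : ℕ) (a : Fin n → G) : Set G :=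
  {x : G | ∃ k : Fin n → ℕ, (∀ i, k i ≤ p - 1) ∧ x = prodPow a k}

/-- `[x, S] = {[x,s] : s ∈ S}`. -/
def commSet {G : Type*} [Group G] (x : G) (S : Set G) : Set G :=
  {g : G | ∃ s ∈ S, comm x s = g}



section AuxBasic

variable {G : Type*} [Group G]

lemma comm_eq_commutatorElement (x y : G) : comm x y = ⁅x⁻¹, y⁻¹⁆ := by
  simp [comm, commutatorElement_def, mul_assoc]

lemma comm_mem_commutator (x y : G) : comm x y ∈ commutator G := by
  rw [comm_eq_commutatorElement, commutator_def]
  exact Subgroup.commutator_mem_commutator (Subgroup.mem_top _) (Subgroup.mem_top _)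

lemma comm_one_left (x : G) : comm 1 x = 1 := by simp [comm]

lemma comm_one_right (x : G) : comm x 1 = 1 := by simp [comm]

lemma comm_inv_order (x y : G) : comm y x = (comm x y)⁻¹ := by
  unfold comm; group

lemma comm_eq_one_iff {x y : G} : comm x y = 1 ↔ x * y = y * x := by
  have h : comm x y = (y * x)⁻¹ * (x * y) := by unfold comm; group
  rw [h, inv_mul_eq_one, eq_comm]

lemma center_mul_comm {c : G} (hc : c ∈ Subgroup.center G) (g : G) : g * c = c * g :=
  Subgroup.mem_center_iff.mp hc g

lemma comm_center_left {c : G} (hc : c ∈ Subgroup.center G) (g : G) : comm c g = 1 := by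
  rw [comm_eq_one_iff]
  exact (center_mul_comm hc g).symm

lemma comm_center_right {c : G} (hc : c ∈ Subgroup.center G) (g : G) : comm g c = 1 := by
  rw [comm_inv_order, comm_center_left hc, inv_one]

/-- identity: `[xy,g] = [x,g] * [[x,g],y] * [y,g]`. -/
lemma commI1 (x y g : G) : comm (x * y) g = comm x g * comm (comm x g) y * comm y g := by
  unfold comm; group

/-- identity: `[x,yz] = [x,z] * [x,y] * [[x,y],z]`. -/
lemma commI2 (x y z : G) : comm x (y * z) = comm x z * comm x y * comm (comm x y) z := by
  unfold comm; group

lemma comm_absorb_right {c : G} (hc : c ∈ Subgroup.center G) (x w : G) :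
    comm x (w * c) = comm x w := by
  rw [commI2, comm_center_right hc, comm_center_right hc, one_mul, mul_one]

lemma central_pull {z : G} (hz : z ∈ Subgroup.center G) (a b : G) :
    z * (a * b) = a * (z * b) := by
  rw [← mul_assoc, ← center_mul_comm hz a, mul_assoc]

lemma comm_exchange (x β c : G) (hζ : comm β c ∈ Subgroup.center G) :
    comm x c * comm x β * comm (comm x β) c
      = comm x β * comm x c * comm (comm x c) β := by
  have h1 : β * c = c * β * comm β c := by unfold comm; group
  calc comm x c * comm x β * comm (comm x β) c
      = comm x (β * c) := (commI2 x β c).symm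
    _ = comm x (c * β * comm β c) := by rw [← h1]
    _ = comm x (c * β) := comm_absorb_right hζ x (c * β)
    _ = comm x β * comm x c * comm (comm x c) β := commI2 x c β

end AuxBasic

section AuxGamma

variable {G : Type*} [Group G]
variable (hγ3 : ∀ u ∈ commutator G, ∀ g : G, comm u g ∈ Subgroup.center G)
include hγ3

lemma comm_center_right_mem {u : G} (hu : u ∈ commutator G) (g : G) :
    comm g u ∈ Subgroup.center G := by
  rw [comm_inv_order]
  exact inv_mem (hγ3 u hu g)

lemma comm_mul_left_of_mem {u : G} (hu : u ∈ commutator G) (v g : G) :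
    comm (u * v) g = comm u g * comm v g := by
  rw [commI1, comm_center_left (hγ3 u hu g), mul_one]

lemma comm_inv_left_of_mem {u : G} (hu : u ∈ commutator G) (g : G) :
    comm u⁻¹ g = (comm u g)⁻¹ := by
  have h := comm_mul_left_of_mem hγ3 hu u⁻¹ g
  rw [mul_inv_cancel, comm_one_left] at h
  exact (inv_eq_of_mul_eq_one_right h.symm).symm

lemma comm_mul_right_of_mem {u : G} (hu : u ∈ commutator G) (g g' : G) :
    comm u (g * g') = comm u g * comm u g' := by
  rw [commI2, comm_center_left (hγ3 u hu g), mul_one,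
    center_mul_comm (hγ3 u hu g) (comm u g')]

lemma gamma_comm_commutator (x y v : G) (hv : v ∈ commutator G) :
    comm (comm x y) v = 1 := by
  have hζ : comm y v ∈ Subgroup.center G := comm_center_right_mem hγ3 hv y
  have h := comm_exchange x y v hζ
  have hA : comm x v ∈ Subgroup.center G := comm_center_right_mem hγ3 hv x
  rw [comm_center_left hA, mul_one, ← center_mul_comm hA (comm x y)] at h
  exact mul_eq_left.mp h

lemma gamma_abelian {u v : G} (hu : u ∈ commutator G) (hv : v ∈ commutator G) :
    comm u v = 1 := by
  have hsub : commutator G ≤ Subgroup.centralizer {v} := by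
    rw [commutator_eq_closure, Subgroup.closure_le]
    rintro g ⟨g₁, g₂, rfl⟩
    have h1 : ⁅g₁, g₂⁆ = comm g₁⁻¹ g₂⁻¹ := by
      simp [comm, commutatorElement_def, mul_assoc]
    have h2 : comm (comm g₁⁻¹ g₂⁻¹) v = 1 := gamma_comm_commutator hγ3 g₁⁻¹ g₂⁻¹ v hv
    rw [comm_eq_one_iff] at h2
    intro t ht
    simp only [Set.mem_singleton_iff] at ht
    subst ht
    rw [h1]
    exact h2.symm
  rw [comm_eq_one_iff]
  exact (Subgroup.mem_centralizer_iff.mp (hsub hu) v rfl).symm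

lemma comm_swap {x β c : G} (hζ : comm β c ∈ Subgroup.center G) :
    comm (comm x β) c = comm (comm x c) β := by
  have h := comm_exchange x β c hζ
  have hPQ : comm x c * comm x β = comm x β * comm x c := by
    have h0 := gamma_abelian hγ3 (comm_mem_commutator x c) (comm_mem_commutator x β)
    rw [comm_eq_one_iff] at h0
    exact h0
  rw [hPQ] at h
  exact mul_left_cancel h

end AuxGamma

section AuxCounting

variable {G : Type*} [Group G]

lemma comm_prodPow {n : ℕ} {u : G}
    (hmul : ∀ g g', comm u (g * g') = comm u g * comm u g')
    (c : Fin n → G) (k : Fin n → ℕ) :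
    comm u (prodPow c k) = (List.ofFn fun i => comm u (c i) ^ k i).prod := by
  let φ : G →* G := MonoidHom.mk' (fun g => comm u g) hmul
  show φ (prodPow c k) = _
  rw [prodPow, map_list_prod, List.map_ofFn]
  refine congrArg List.prod ?_
  rw [List.ofFn_inj]
  funext i
  simp [φ, Function.comp, map_pow]

lemma commSet_subset_range {n p : ℕ} (hp : 0 < p) (u : G) (c : Fin n → G) :
    commSet u (powerProducts p c) ⊆
      Set.range (fun k : Fin n → Fin p => comm u (prodPow c (fun i => (k i : ℕ)))) := by
  rintro t ⟨s, ⟨k, hk, hkeq⟩, rfl⟩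
  subst hkeq
  refine ⟨fun i => ⟨k i, lt_of_le_of_lt (hk i) (Nat.sub_lt hp one_pos)⟩, rfl⟩

lemma card_range_le' {α β : Type*} [Finite α] (f : α → β) :
    Nat.card (Set.range f) ≤ Nat.card α :=
  Nat.card_le_card_of_surjective (Set.rangeFactorization f) Set.rangeFactorization_surjective

lemma card_commSet_box_le {n p : ℕ} [Finite G] (hp : 0 < p) (u : G) (c : Fin n → G) :
    Nat.card (commSet u (powerProducts p c)) ≤ p ^ n := by
  have h1 := Nat.card_mono (Set.toFinite _) (commSet_subset_range hp u c)
  have h2 := card_range_le' (fun k : Fin n → Fin p => comm u (prodPow c (fun i => (k i : ℕ))))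
  have h3 : Nat.card (Fin n → Fin p) = p ^ n := by
    simp [Nat.card_eq_fintype_card]
  exact h1.trans (h2.trans h3.le)

lemma kill {p n : ℕ} [Finite G] (hp : p.Prime) (hn : 1 ≤ n)
    (c : Fin n → G) (W : Subgroup G) (u : G)
    (hmul : ∀ g g', comm u (g * g') = comm u g * comm u g')
    (hWcard : p ^ n ≤ Nat.card W)
    (hWeq : commSet u (powerProducts p c) = (W : Set G))
    (hj : comm u (c ⟨0, hn⟩) = 1) : False := by
  set j : Fin n := ⟨0, hn⟩
  have hsub : commSet u (powerProducts p c) ⊆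
      Set.range (fun m : {i : Fin n // i ≠ j} → Fin p =>
        (List.ofFn fun i => if h : i = j then 1 else comm u (c i) ^ ((m ⟨i, h⟩ : Fin p) : ℕ)).prod) := by
    rintro t ⟨s, ⟨k, hk, hkeq⟩, rfl⟩
    subst hkeq
    refine ⟨fun i => ⟨k i.1, lt_of_le_of_lt (hk i.1) (Nat.sub_lt hp.pos one_pos)⟩, ?_⟩
    rw [comm_prodPow hmul]
    refine congrArg List.prod ?_
    rw [List.ofFn_inj]
    funext i
    by_cases h : i = j
    · subst h
      rw [dif_pos rfl, hj, one_pow]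
    · rw [dif_neg h]
  have h1 := Nat.card_mono (Set.toFinite _) hsub
  have h2 := card_range_le' (fun m : {i : Fin n // i ≠ j} → Fin p =>
        (List.ofFn fun i => if h : i = j then 1 else comm u (c i) ^ ((m ⟨i, h⟩ : Fin p) : ℕ)).prod)
  have h3 : Nat.card ({i : Fin n // i ≠ j} → Fin p) = p ^ (n - 1) := by
    rw [Nat.card_eq_fintype_card, Fintype.card_fun]
    congr 1
    · exact Fintype.card_fin p
    · rw [Fintype.card_subtype_compl, Fintype.card_subtype_eq, Fintype.card_fin]
  have h4 : Nat.card (commSet u (powerProducts p c)) = Nat.card W := by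
    rw [hWeq]
    simp
  have h5 : p ^ (n - 1) < p ^ n := Nat.pow_lt_pow_right hp.one_lt (Nat.sub_lt hn one_pos)
  have h6 : Nat.card W ≤ p ^ (n - 1) := by
    rw [← h4]
    exact h1.trans (h2.trans h3.le)
  exact absurd (hWcard.trans h6) (not_le.mpr h5)

lemma first_mem_powerProducts {n p : ℕ} (hp : 2 ≤ p) (hn : 1 ≤ n) (c : Fin n → G) :
    c ⟨0, hn⟩ ∈ powerProducts p c := by
  refine ⟨fun i => if (i : ℕ) = 0 then 1 else 0, fun i => ?_, ?_⟩
  · dsimp only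
    split <;> omega
  · obtain ⟨m, rfl⟩ : ∃ m, n = m + 1 := ⟨n - 1, by omega⟩
    rw [prodPow, List.ofFn_succ]
    simp [Fin.val_succ, List.ofFn_const]

end AuxCounting

section AuxCommGroup

lemma comm_group_calc {H : Type*} [CommGroup H] (u q r s z1 z2 : H)
    (h : z1 * z2 = u * (q * r)⁻¹) :
    z1 * (s * (u⁻¹ * (q * (r * (z2 * s⁻¹))))) = 1 := by
  have h2 : z1 * (s * (u⁻¹ * (q * (r * (z2 * s⁻¹)))))
      = (z1 * z2) * ((q * r) * u⁻¹) * (s * s⁻¹) := by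
    simp only [mul_comm, mul_left_comm, mul_assoc]
  rw [h2, h]
  group

lemma comm_group_calc2 {H : Type*} [Group H] (u z1 z2 : H)
    (h : z1 * z2 = u) : z2 * (u⁻¹ * z1) = 1 := by
  subst h
  group

end AuxCommGroup

/-- given a generating set `a_1, …, a_n, b_1, …, b_n` of a stem
finite `p`-group of class 3 and conjugate type `(1, p^{2n})` satisfying
properties (i)–(v), for every `h ∈ G' \ Z(G)` and every `a ∈ A`, `b ∈ B` with
`ab ≠ 1`, there is `h* ∈ G'` with `h ∈ [a·b·h*, G]`. -/
theorem stmt15 (p n : ℕ) (hp : p.Prime) (hn : 1 ≤ n)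
    (G : Type*) [Group G] [Finite G] (hG : IsPGroup p G)
    (hstem : Subgroup.center G ≤ commutator G)
    (hclass : (⊤ : Subgroup G).lowerCentralSeries 3 = ⊥ ∧ (⊤ : Subgroup G).lowerCentralSeries 2 ≠ ⊥)
    (hct : IsConjugateType1 G (p ^ (2 * n)))
    (a b : Fin n → G)
    (hgen : Subgroup.closure (Set.range a ∪ Set.range b) = ⊤)
    -- (i)
    (hi : commutator G = Subgroup.closure
      (Set.range (fun i => comm (a ⟨0, hn⟩) (b i)) ∪ (Subgroup.center G : Set G)))
    -- (ii)
    (hii : Subgroup.center G = Subgroup.closure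
      (Set.range (fun i => comm (comm (a ⟨0, hn⟩) (b ⟨0, hn⟩)) (a i)) ∪
       Set.range (fun i => comm (comm (a ⟨0, hn⟩) (b ⟨0, hn⟩)) (b i))))
    -- (iii)(1)
    (hiii1a : ∀ x ∈ powerProducts p a, ∀ y ∈ powerProducts p a,
      comm x y ∈ Subgroup.center G)
    (hiii1b : ∀ x ∈ powerProducts p b, ∀ y ∈ powerProducts p b,
      comm x y ∈ Subgroup.center G)
    -- (iii)(2)
    (hiii2 : ∀ x ∈ powerProducts p a, ∀ y ∈ powerProducts p b,
      x ≠ 1 → y ≠ 1 → comm x y ∉ Subgroup.center G)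
    -- (iii)(3)
    (hiii3 : ∀ x ∈ powerProducts p a, x ≠ 1 → commutator G =
      Subgroup.closure (Set.range (fun i => comm x (b i)) ∪ (Subgroup.center G : Set G)))
    -- (iii)(4)
    (hiii4 : ∀ y ∈ powerProducts p b, y ≠ 1 → commutator G =
      Subgroup.closure (Set.range (fun i => comm (a i) y) ∪ (Subgroup.center G : Set G)))
    -- (iv)
    (hiv1 : ∀ h' ∈ (commutator G : Set G), h' ∉ Subgroup.center G →
      commSet h' (powerProducts p a) =
        (Subgroup.closure (Set.range (fun i => comm (comm (a ⟨0, hn⟩) (b ⟨0, hn⟩)) (a i))) : Set G) ∧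
      commSet h' (powerProducts p b) =
        (Subgroup.closure (Set.range (fun i => comm (comm (a ⟨0, hn⟩) (b ⟨0, hn⟩)) (b i))) : Set G))
    (hiv2 : ∀ x ∈ powerProducts p a, x ≠ 1 → commSet x (commutator G : Set G) =
      (Subgroup.closure (Set.range (fun i => comm (comm (a ⟨0, hn⟩) (b ⟨0, hn⟩)) (a i))) : Set G))
    (hiv3 : ∀ y ∈ powerProducts p b, y ≠ 1 → commSet y (commutator G : Set G) =
      (Subgroup.closure (Set.range (fun i => comm (comm (a ⟨0, hn⟩) (b ⟨0, hn⟩)) (b i))) : Set G))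
    -- (v)
    (hv : ∀ h' ∈ (commutator G : Set G), h' ∉ Subgroup.center G →
      commSet h' Set.univ = (Subgroup.center G : Set G)) :
    ∀ h' ∈ (commutator G : Set G), h' ∉ Subgroup.center G →
      ∀ x ∈ powerProducts p a, ∀ y ∈ powerProducts p b, x * y ≠ 1 →
        ∃ hstar ∈ (commutator G : Set G), h' ∈ commSet (x * y * hstar) Set.univ := by
  intro h' hgam hnc x hxA y hyB hxy
  haveI : Fact p.Prime := ⟨hp⟩
  have hGmem : h' ∈ commutator G := hgam
  set a1 : G := a ⟨0, hn⟩ with ha1def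
  set b1 : G := b ⟨0, hn⟩ with hb1def
  set Z1 : Subgroup G :=
    Subgroup.closure (Set.range (fun i => comm (comm a1 b1) (a i))) with hZ1def
  set Z2 : Subgroup G :=
    Subgroup.closure (Set.range (fun i => comm (comm a1 b1) (b i))) with hZ2def
  -- class ≤ 3 : [G', G] is central
  have hγ3 : ∀ u ∈ commutator G, ∀ g : G, comm u g ∈ Subgroup.center G := by
    intro u hu g
    have h2 : comm u g ∈ (⊤ : Subgroup G).lowerCentralSeries 2 := by
      have e2 : (⊤ : Subgroup G).lowerCentralSeries 2 = ⁅(⊤ : Subgroup G).lowerCentralSeries 1, ⊤⁆ :=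
        Subgroup.lowerCentralSeries_succ _ 1
      rw [comm_eq_commutatorElement, e2, Subgroup.top_lowerCentralSeries_one]
      exact Subgroup.commutator_mem_commutator (inv_mem hu) (Subgroup.mem_top _)
    rw [Subgroup.mem_center_iff]
    intro g'
    have h3 : ⁅comm u g, g'⁆ ∈ (⊤ : Subgroup G).lowerCentralSeries 3 := by
      have e3 : (⊤ : Subgroup G).lowerCentralSeries 3 = ⁅(⊤ : Subgroup G).lowerCentralSeries 2, ⊤⁆ :=
        Subgroup.lowerCentralSeries_succ _ 2
      rw [e3]
      exact Subgroup.commutator_mem_commutator h2 (Subgroup.mem_top _)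
    rw [hclass.1, Subgroup.mem_bot] at h3
    exact (commutatorElement_eq_one_iff_commute.mp h3).symm.eq
  -- nondegeneracy of the distinguished generators
  have ha1 : a1 ≠ 1 := by
    intro ha1
    apply hnc
    have hle : commutator G ≤ Subgroup.center G := by
      rw [hi, Subgroup.closure_le]
      rintro g (⟨i, rfl⟩ | hg)
      · show comm a1 (b i) ∈ (Subgroup.center G : Set G)
        rw [ha1, comm_one_left]
        exact Subgroup.one_mem _
      · exact hg
    exact hle hGmem
  have hb1 : b1 ≠ 1 := by
    intro hb1
    have hzbot : Subgroup.center G = ⊥ := by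
      rw [hii, Subgroup.closure_eq_bot_iff]
      rintro g (⟨i, rfl⟩ | ⟨i, rfl⟩) <;>
        simp [hb1, comm_one_right, comm_one_left]
    have hne : h' ≠ 1 := by
      intro h1
      exact hnc (h1 ▸ Subgroup.one_mem _)
    haveI : Nontrivial G := ⟨⟨h', 1, hne⟩⟩
    have hcnt := IsPGroup.center_nontrivial hG
    rw [hzbot] at hcnt
    obtain ⟨u, v, huv⟩ := hcnt
    exact huv (Subsingleton.elim u v)
  have ha1A : a1 ∈ powerProducts p a := first_mem_powerProducts hp.two_le hn a
  have hb1B : b1 ∈ powerProducts p b := first_mem_powerProducts hp.two_le hn b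
  -- the center is the product of Z1 and Z2
  have hZcenter : Subgroup.center G = Z1 ⊔ Z2 := by
    rw [hii, Subgroup.closure_union, hZ1def, hZ2def]
  have hZ1le : Z1 ≤ Subgroup.center G := by
    rw [hZcenter]; exact le_sup_left
  have hZ2le : Z2 ≤ Subgroup.center G := by
    rw [hZcenter]; exact le_sup_right
  haveI hZ2N : Z2.Normal := by
    constructor
    intro z hz g
    have e : g * z * g⁻¹ = z := by
      rw [center_mul_comm (hZ2le hz) g, mul_inv_cancel_right]
    rw [e]
    exact hz
  have hZprod : ∀ ζ ∈ Subgroup.center G, ∃ z1 ∈ Z1, ∃ z2 ∈ Z2, z1 * z2 = ζ := by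
    intro ζ hζ
    have h1 : ζ ∈ Z1 ⊔ Z2 := by rw [← hZcenter]; exact hζ
    have h2 : ζ ∈ (Z1 : Set G) * (Z2 : Set G) := by
      rw [← Subgroup.mul_normal Z1 Z2]
      exact h1
    obtain ⟨z1, hz1, z2, hz2, hz⟩ := h2
    exact ⟨z1, hz1, z2, hz2, hz⟩
  -- counting facts
  have cardZ : Nat.card (Subgroup.center G) = p ^ (2 * n) := by
    have h0 := hct h' hnc
    have himg : conjClass h' = (fun t => h' * t) '' (commSet h' Set.univ) := by
      ext t
      constructor
      · rintro ⟨g, rfl⟩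
        exact ⟨comm h' g, ⟨g, trivial, rfl⟩, by unfold comm; group⟩
      · rintro ⟨s, ⟨g, -, rfl⟩, rfl⟩
        exact ⟨g, by unfold comm; group⟩
    rw [himg, Nat.card_image_of_injective (mul_right_injective h'),
      hv h' hgam hnc] at h0
    simpa using h0
  have cardZ1le : Nat.card Z1 ≤ p ^ n := by
    have h1 := (hiv1 h' hgam hnc).1
    have h2 := card_commSet_box_le (G := G) hp.pos h' a
    rw [h1] at h2
    simpa using h2
  have cardZ2le : Nat.card Z2 ≤ p ^ n := by
    have h1 := (hiv1 h' hgam hnc).2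
    have h2 := card_commSet_box_le (G := G) hp.pos h' b
    rw [h1] at h2
    simpa using h2
  have cardZmul : Nat.card (Subgroup.center G) ≤ Nat.card Z1 * Nat.card Z2 := by
    have hsurj : Function.Surjective
        (fun zz : Z1 × Z2 =>
          (⟨zz.1.1 * zz.2.1, mul_mem (hZ1le zz.1.2) (hZ2le zz.2.2)⟩ :
            Subgroup.center G)) := by
      rintro ⟨ζ, hζ⟩
      obtain ⟨z1, hz1, z2, hz2, hz⟩ := hZprod ζ hζ
      exact ⟨(⟨z1, hz1⟩, ⟨z2, hz2⟩), Subtype.ext hz⟩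
    have h1 := Nat.card_le_card_of_surjective _ hsurj
    rwa [Nat.card_prod] at h1
  have hppos : 0 < p ^ n := Nat.pow_pos hp.pos
  have hsq : p ^ n * p ^ n = p ^ (2 * n) := by rw [two_mul, pow_add]
  have cardZ1ge : p ^ n ≤ Nat.card Z1 := by
    have h1 : p ^ n * p ^ n ≤ Nat.card Z1 * Nat.card Z2 := by
      rw [hsq, ← cardZ]; exact cardZmul
    have h2 : Nat.card Z1 * Nat.card Z2 ≤ Nat.card Z1 * p ^ n :=
      Nat.mul_le_mul_left _ cardZ2le
    exact Nat.le_of_mul_le_mul_right (h1.trans h2) hppos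
  have cardZ2ge : p ^ n ≤ Nat.card Z2 := by
    have h1 : p ^ n * p ^ n ≤ Nat.card Z2 * Nat.card Z1 := by
      rw [hsq, ← cardZ, Nat.mul_comm]; exact cardZmul
    have h2 : Nat.card Z2 * Nat.card Z1 ≤ Nat.card Z2 * p ^ n :=
      Nat.mul_le_mul_left _ cardZ1le
    exact Nat.le_of_mul_le_mul_right (h1.trans h2) hppos
  -- the key "separation" facts
  have hkill_b : ∀ u : G, u ∈ commutator G → comm u b1 = 1 →
      u ∈ Subgroup.center G := by
    intro u huG hub
    by_contra hu
    exact kill hp hn b Z2 u (fun g g' => comm_mul_right_of_mem hγ3 huG g g')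
      cardZ2ge (hiv1 u huG hu).2 hub
  have hkill_a : ∀ u : G, u ∈ commutator G → comm u a1 = 1 →
      u ∈ Subgroup.center G := by
    intro u huG hua
    by_contra hu
    exact kill hp hn a Z1 u (fun g g' => comm_mul_right_of_mem hγ3 huG g g')
      cardZ1ge (hiv1 u huG hu).1 hua
  -- main case split
  by_cases hx1 : x = 1
  · -- dual case : x = 1, so y ≠ 1
    subst hx1
    have hy1 : y ≠ 1 := by simpa using hxy
    have hh1nc : comm a1 y ∉ Subgroup.center G := hiii2 a1 ha1A y hyB ha1 hy1
    have hh1G : comm a1 y ∈ commutator G := comm_mem_commutator a1 y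
    have hy0 : comm h' a1 ∈ Z1 := by
      have h1 : comm h' a1 ∈ commSet h' (powerProducts p a) := ⟨a1, ha1A, rfl⟩
      rwa [(hiv1 h' hgam hnc).1] at h1
    have hαex : (comm h' a1)⁻¹ ∈ commSet (comm a1 y) (powerProducts p a) := by
      rw [(hiv1 (comm a1 y) hh1G hh1nc).1]
      exact inv_mem hy0
    obtain ⟨α, hαA, hαc⟩ := hαex
    set u : G := (comm y α)⁻¹ * h' with hudef
    have huG : u ∈ commutator G :=
      mul_mem (inv_mem (comm_mem_commutator y α)) hGmem
    have hua : comm u a1 = 1 := by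
      rw [hudef, comm_mul_left_of_mem hγ3 (inv_mem (comm_mem_commutator y α)) h' a1,
        comm_inv_left_of_mem hγ3 (comm_mem_commutator y α) a1,
        comm_swap hγ3 (hiii1a α hαA a1 ha1A),
        comm_inv_order a1 y,
        comm_inv_left_of_mem hγ3 (comm_mem_commutator a1 y) α, hαc]
      simp
    have huZ : u ∈ Subgroup.center G := hkill_a u huG hua
    have hα1 : α ≠ 1 := by
      rintro rfl
      apply hnc
      have he : u = h' := by rw [hudef, comm_one_right, inv_one, one_mul]
      exact he ▸ huZ
    obtain ⟨z1, hz1, z2, hz2, hzeq⟩ := hZprod u huZ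
    have hz2' : z2 ∈ commSet y (commutator G : Set G) := by
      rw [hiv3 y hyB hy1]
      exact hz2
    obtain ⟨w, hwG', hww⟩ := hz2'
    have hwG : w ∈ commutator G := hwG'
    have hz1' : z1⁻¹ ∈ commSet α (commutator G : Set G) := by
      rw [hiv2 α hαA hα1]
      exact inv_mem hz1
    obtain ⟨w', hw'G', hw'c⟩ := hz1'
    have hw'G : w' ∈ commutator G := hw'G'
    have hts : comm w' α = z1 := by
      rw [comm_inv_order α w', hw'c, inv_inv]
    refine ⟨w', hw'G', ⟨α * w, Set.mem_univ _, ?_⟩⟩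
    have hcyα : comm y α = h' * u⁻¹ := by rw [hudef]; group
    have hA : comm (1 * y * w') (α * w)
        = comm (1 * y * w') w * comm (1 * y * w') α := by
      rw [commI2, gamma_abelian hγ3 (comm_mem_commutator _ _) hwG, mul_one]
    have hB : comm (1 * y * w') w = comm y w := by
      calc comm (1 * y * w') w
          = comm (1 * y) w * comm (comm (1 * y) w) w' * comm w' w :=
            commI1 (1 * y) w' w
        _ = comm (1 * y) w := by
            rw [comm_center_left (comm_center_right_mem hγ3 hwG (1 * y)) w',
              gamma_abelian hγ3 hw'G hwG, mul_one, mul_one]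
        _ = comm y w := by rw [one_mul]
    have hC : comm (1 * y * w') α = comm y α * comm w' α := by
      calc comm (1 * y * w') α
          = comm (1 * y) α * comm (comm (1 * y) α) w' * comm w' α :=
            commI1 (1 * y) w' α
        _ = comm (1 * y) α * comm w' α := by
            rw [gamma_abelian hγ3 (comm_mem_commutator (1 * y) α) hw'G, mul_one]
        _ = comm y α * comm w' α := by rw [one_mul]
    rw [hA, hB, hC, hww, hts, hcyα]
    simp only [mul_assoc]
    rw [central_pull (hZ2le hz2) h', mul_eq_left, ← hzeq]
    group
  · -- main case : x ≠ 1
    have hh1nc : comm x b1 ∉ Subgroup.center G := hiii2 x hxA b1 hb1B hx1 hb1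
    have hh1G : comm x b1 ∈ commutator G := comm_mem_commutator x b1
    have hhb : comm h' b1 ∈ Z2 := by
      have h1 : comm h' b1 ∈ commSet h' (powerProducts p b) := ⟨b1, hb1B, rfl⟩
      rwa [(hiv1 h' hgam hnc).2] at h1
    have hβex : comm h' b1 ∈ commSet (comm x b1) (powerProducts p b) := by
      rw [(hiv1 (comm x b1) hh1G hh1nc).2]
      exact hhb
    obtain ⟨β, hβB, hβc⟩ := hβex
    set u : G := (comm x β)⁻¹ * h' with hudef
    have huG : u ∈ commutator G :=
      mul_mem (inv_mem (comm_mem_commutator x β)) hGmem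
    have hub : comm u b1 = 1 := by
      rw [hudef, comm_mul_left_of_mem hγ3 (inv_mem (comm_mem_commutator x β)) h' b1,
        comm_inv_left_of_mem hγ3 (comm_mem_commutator x β) b1,
        comm_swap hγ3 (hiii1b β hβB b1 hb1B), hβc, inv_mul_cancel]
    have huZ : u ∈ Subgroup.center G := hkill_b u huG hub
    have hβ1 : β ≠ 1 := by
      rintro rfl
      apply hnc
      have he : u = h' := by rw [hudef, comm_one_right, inv_one, one_mul]
      exact he ▸ huZ
    have hrZ : comm y β ∈ Subgroup.center G := hiii1b y hyB β hβB
    generalize hqe : comm (comm x β) y = q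
    have hqZ : q ∈ Subgroup.center G := hqe ▸ hγ3 _ (comm_mem_commutator x β) y
    have hζZ : u * (q * comm y β)⁻¹ ∈ Subgroup.center G :=
      mul_mem huZ (inv_mem (mul_mem hqZ hrZ))
    obtain ⟨z1, hz1, z2, hz2, hzeq⟩ := hZprod _ hζZ
    have hz1' : z1 ∈ commSet x (commutator G : Set G) := by
      rw [hiv2 x hxA hx1]
      exact hz1
    obtain ⟨w, hwG', hww⟩ := hz1'
    have hwG : w ∈ commutator G := hwG'
    have hsZ2 : comm y w ∈ Z2 := by
      by_cases hy1 : y = 1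
      · rw [hy1, comm_one_left]
        exact Subgroup.one_mem _
      · have h1 : comm y w ∈ commSet y (commutator G : Set G) := ⟨w, hwG', rfl⟩
        rwa [hiv3 y hyB hy1] at h1
    have hsZ : comm y w ∈ Subgroup.center G := hZ2le hsZ2
    have ht' : (z2 * (comm y w)⁻¹)⁻¹ ∈ commSet β (commutator G : Set G) := by
      rw [hiv3 β hβB hβ1]
      exact inv_mem (mul_mem hz2 (inv_mem hsZ2))
    obtain ⟨w', hw'G', hw'c⟩ := ht'
    have hw'G : w' ∈ commutator G := hw'G'
    have hts : comm w' β = z2 * (comm y w)⁻¹ := by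
      rw [comm_inv_order β w', hw'c, inv_inv]
    refine ⟨w', hw'G', ⟨β * w, Set.mem_univ _, ?_⟩⟩
    have hcxβ : comm x β = h' * u⁻¹ := by rw [hudef]; group
    have hA : comm (x * y * w') (β * w)
        = comm (x * y * w') w * comm (x * y * w') β := by
      rw [commI2, gamma_abelian hγ3 (comm_mem_commutator _ _) hwG, mul_one]
    have hB : comm (x * y * w') w = comm x w * comm y w := by
      calc comm (x * y * w') w
          = comm (x * y) w * comm (comm (x * y) w) w' * comm w' w :=
            commI1 (x * y) w' w
        _ = comm (x * y) w := by
            rw [comm_center_left (comm_center_right_mem hγ3 hwG (x * y)) w',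
              gamma_abelian hγ3 hw'G hwG, mul_one, mul_one]
        _ = comm x w * comm (comm x w) y * comm y w := commI1 x y w
        _ = comm x w * comm y w := by
            rw [comm_center_left (comm_center_right_mem hγ3 hwG x) y, mul_one]
    have hC : comm (x * y * w') β
        = comm x β * comm (comm x β) y * comm y β * comm w' β := by
      calc comm (x * y * w') β
          = comm (x * y) β * comm (comm (x * y) β) w' * comm w' β :=
            commI1 (x * y) w' β
        _ = comm (x * y) β * comm w' β := by
            rw [gamma_abelian hγ3 (comm_mem_commutator (x * y) β) hw'G, mul_one]
        _ = comm x β * comm (comm x β) y * comm y β * comm w' β := by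
            rw [commI1 x y β]
    rw [hA, hB, hC, hww, hts, hqe, hcxβ]
    simp only [mul_assoc]
    rw [central_pull hsZ h', central_pull (hZ1le hz1) h', mul_eq_left]
    open scoped IsMulCommutative in
    have keyZ := comm_group_calc (H := Subgroup.center G)
      ⟨u, huZ⟩ ⟨q, hqZ⟩ ⟨comm y β, hrZ⟩ ⟨comm y w, hsZ⟩
      ⟨z1, hZ1le hz1⟩ ⟨z2, hZ2le hz2⟩ (Subtype.ext hzeq)
    exact congrArg Subtype.val keyZ



end Paper
end

section
/- Let G be a finite group and H a subgroup of the center Z(G) (hence normal in G), and let π : G → G/H be the quotient map. Then for every g ∈ G: (a) the fiber of π(g) in G/H equals the union, over all y ∈ K(G) ∩ gH, of the images under π×π of the fibers of y in G; and (b) |fiber_{G/H}(π(g))| · |H|² = Σ_{y ∈ gH} |fiber_G(y)| = |{(x,y) ∈ G×G : [x,y] ∈ gH}|. -/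
open scoped Classical

namespace Paper

lemma natcard_setOf {α} [Fintype α] (p : α → Prop) [DecidablePred p] :
    Nat.card {x : α | p x} = (Finset.univ.filter p).card := by
  rw [Nat.card_eq_fintype_card]
  simp [Fintype.card_subtype]

lemma comm_mk {G : Type*} [Group G] (H : Subgroup G) [H.Normal] (x y : G) :
    (QuotientGroup.mk (comm x y) : G ⧸ H) =
      comm (QuotientGroup.mk x) (QuotientGroup.mk y) := rfl

lemma fiber_mk_card {G : Type*} [Group G] [Fintype G] (H : Subgroup G) [H.Normal]
    (a : G ⧸ H) :
    (Finset.univ.filter (fun x : G => (QuotientGroup.mk x : G ⧸ H) = a)).card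
      = Nat.card H := by
  obtain ⟨x0, rfl⟩ := Quotient.exists_rep a
  rw [Nat.card_eq_fintype_card, ← Fintype.card_subtype]
  refine Fintype.card_congr ?_
  refine ⟨fun x => ⟨x0⁻¹ * x.1, ?_⟩, fun h => ⟨x0 * h.1, ?_⟩, ?_, ?_⟩
  · have := x.2
    rwa [eq_comm, QuotientGroup.eq] at this
  · have : (QuotientGroup.mk (h.1 : G) : G ⧸ H) = 1 :=
      (QuotientGroup.eq_one_iff _).2 h.2
    show (QuotientGroup.mk (x0 * h.1) : G ⧸ H) = Quotient.mk _ x0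
    rw [QuotientGroup.mk_mul, this, mul_one]
  · intro x; ext; simp
  · intro h; ext; simp

lemma phi_fiber_card {G : Type*} [Group G] [Fintype G] (H : Subgroup G) [H.Normal]
    (p : (G ⧸ H) × (G ⧸ H)) :
    (Finset.univ.filter (fun q : G × G =>
      ((QuotientGroup.mk q.1 : G ⧸ H), (QuotientGroup.mk q.2 : G ⧸ H)) = p)).card
      = Nat.card H * Nat.card H := by
  have : (Finset.univ.filter (fun q : G × G =>
      ((QuotientGroup.mk q.1 : G ⧸ H), (QuotientGroup.mk q.2 : G ⧸ H)) = p)) =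
      (Finset.univ.filter (fun x : G => (QuotientGroup.mk x : G ⧸ H) = p.1)) ×ˢ
      (Finset.univ.filter (fun x : G => (QuotientGroup.mk x : G ⧸ H) = p.2)) := by
    ext q; simp [Prod.ext_iff, and_assoc]
  rw [this, Finset.card_product, fiber_mk_card, fiber_mk_card]


/-- fibers in a central quotient `G/H`: (a) the fiber of `π(g)`
is the union over `y ∈ K(G) ∩ gH` of the images of the fibers of `y`; and
(b) the corresponding counting identities. -/
theorem stmt17 (G : Type*) [Group G] [Fintype G]
    (H : Subgroup G) (hH : H ≤ Subgroup.center G) [H.Normal] (g : G) :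
    -- (a)
    fiber (QuotientGroup.mk g : G ⧸ H) =
      (⋃ y ∈ KG G ∩ {x : G | ∃ h ∈ H, x = g * h},
        (fun q : G × G =>
          ((QuotientGroup.mk q.1 : G ⧸ H), (QuotientGroup.mk q.2 : G ⧸ H))) '' fiber y) ∧
    -- (b)
    Nat.card (fiber (QuotientGroup.mk g : G ⧸ H)) * (Nat.card H) ^ 2 =
      ∑ y ∈ Finset.univ.filter (fun y : G => ∃ h ∈ H, y = g * h), Nat.card (fiber y) ∧
    Nat.card (fiber (QuotientGroup.mk g : G ⧸ H)) * (Nat.card H) ^ 2 =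
      Nat.card {q : G × G | ∃ h ∈ H, comm q.1 q.2 = g * h} := by
  -- abbreviations
  set Sfin : Finset (G × G) :=
    Finset.univ.filter (fun q : G × G => ∃ h ∈ H, comm q.1 q.2 = g * h) with hSfin
  set Ffin : Finset ((G ⧸ H) × (G ⧸ H)) :=
    Finset.univ.filter (fun p => comm p.1 p.2 = (QuotientGroup.mk g : G ⧸ H)) with hFfin
  have hmem_iff : ∀ c : G, (∃ h ∈ H, c = g * h) ↔
      (QuotientGroup.mk c : G ⧸ H) = QuotientGroup.mk g := by
    intro c
    constructor
    · rintro ⟨h, hh, rfl⟩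
      rw [QuotientGroup.mk_mul, (QuotientGroup.eq_one_iff _).2 hh, mul_one]
    · intro hc
      rw [QuotientGroup.eq] at hc
      exact ⟨g⁻¹ * c, by simpa using H.inv_mem hc, by group⟩
  -- part (a)
  have parta : fiber (QuotientGroup.mk g : G ⧸ H) =
      (⋃ y ∈ KG G ∩ {x : G | ∃ h ∈ H, x = g * h},
        (fun q : G × G =>
          ((QuotientGroup.mk q.1 : G ⧸ H), (QuotientGroup.mk q.2 : G ⧸ H))) '' fiber y) := by
    ext ⟨a, b⟩
    simp only [Set.mem_iUnion, Set.mem_inter_iff, Set.mem_image]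
    constructor
    · intro hab
      obtain ⟨x, rfl⟩ := Quotient.exists_rep a
      obtain ⟨y, rfl⟩ := Quotient.exists_rep b
      have hc : (QuotientGroup.mk (comm x y) : G ⧸ H) = QuotientGroup.mk g := hab
      exact ⟨comm x y, ⟨⟨⟨x, y, rfl⟩, (hmem_iff _).2 hc⟩, ⟨(x, y), rfl, rfl⟩⟩⟩
    · rintro ⟨c, ⟨⟨-, hc⟩, ⟨⟨x, y⟩, hfib, heq⟩⟩⟩
      rw [Prod.ext_iff] at heq
      obtain ⟨h1, h2⟩ := heq
      subst h1; subst h2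
      show (QuotientGroup.mk (comm x y) : G ⧸ H) = QuotientGroup.mk g
      rw [hfib]
      exact (hmem_iff _).1 hc
  have key : Sfin.card = Ffin.card * Nat.card H ^ 2 := by
    have h1 : Sfin.card = ∑ p ∈ Ffin, (Sfin.filter (fun q : G × G =>
        ((QuotientGroup.mk q.1 : G ⧸ H), (QuotientGroup.mk q.2 : G ⧸ H)) = p)).card := by
      refine Finset.card_eq_sum_card_fiberwise ?_
      rintro ⟨x, y⟩ hq
      simp only [hSfin, Finset.mem_coe, Finset.mem_filter, Finset.mem_univ, true_and] at hq
      simp only [hFfin, Finset.mem_coe, Finset.mem_filter, Finset.mem_univ, true_and]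
      exact (hmem_iff _).1 hq
    have h2 : ∀ p ∈ Ffin, (Sfin.filter (fun q : G × G =>
        ((QuotientGroup.mk q.1 : G ⧸ H), (QuotientGroup.mk q.2 : G ⧸ H)) = p)).card
        = Nat.card H ^ 2 := by
      intro p hp
      simp only [hFfin, Finset.mem_filter, Finset.mem_univ, true_and] at hp
      have hfix : Sfin.filter (fun q : G × G =>
          ((QuotientGroup.mk q.1 : G ⧸ H), (QuotientGroup.mk q.2 : G ⧸ H)) = p) =
          Finset.univ.filter (fun q : G × G =>
          ((QuotientGroup.mk q.1 : G ⧸ H), (QuotientGroup.mk q.2 : G ⧸ H)) = p) := by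
        ext ⟨x, y⟩
        simp only [hSfin, Finset.filter_filter, Finset.mem_filter, Finset.mem_univ, true_and,
          and_iff_right_iff_imp]
        intro hxy
        subst hxy
        exact (hmem_iff _).2 hp
      rw [hfix, phi_fiber_card]; ring
    rw [h1, Finset.sum_congr rfl h2, Finset.sum_const, smul_eq_mul]
  have hF : Nat.card (fiber (QuotientGroup.mk g : G ⧸ H)) = Ffin.card := by
    show Nat.card {p : (G ⧸ H) × (G ⧸ H) | comm p.1 p.2 = (QuotientGroup.mk g : G ⧸ H)} = Ffin.card
    rw [hFfin]
    exact natcard_setOf _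
  refine ⟨parta, ?_, ?_⟩
  · rw [hF, ← key]
    have h3 : Sfin.card = ∑ y ∈ Finset.univ.filter (fun y : G => ∃ h ∈ H, y = g * h),
        (Sfin.filter (fun q : G × G => comm q.1 q.2 = y)).card := by
      refine Finset.card_eq_sum_card_fiberwise ?_
      rintro ⟨x, z⟩ hq
      simp only [hSfin, Finset.mem_coe, Finset.mem_filter, Finset.mem_univ, true_and] at hq ⊢
      obtain ⟨h, hh, hc⟩ := hq
      exact ⟨h, hh, hc⟩
    rw [h3]
    refine Finset.sum_congr rfl fun y hy => ?_
    simp only [Finset.mem_filter, Finset.mem_univ, true_and] at hy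
    have hfix : Sfin.filter (fun q : G × G => comm q.1 q.2 = y) =
        Finset.univ.filter (fun q : G × G => comm q.1 q.2 = y) := by
      ext ⟨x, z⟩
      simp only [hSfin, Finset.filter_filter, Finset.mem_filter, Finset.mem_univ, true_and,
        and_iff_right_iff_imp]
      rintro rfl
      exact hy
    rw [hfix]
    show _ = Nat.card {q : G × G | comm q.1 q.2 = y}
    exact (natcard_setOf _).symm
  · rw [hF, ← key, hSfin]
    exact (natcard_setOf _).symm


end Paper
end
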